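/- For every configuration P with P ≠ {(0,0)}, setting ρ := s/α, one has α ≤ e^(−ρ+1). -/

import Mathlib

open MeasureTheory Set
open scoped Classical

noncomputable section

/-- The cake: the unit square `[0,1]²`. -/
def unitSq : Set (ℝ × ℝ) := Set.Icc ((0, 0) : ℝ × ℝ) ((1, 1) : ℝ × ℝ)

/-- A configuration: a finite point set in the unit square containing the origin. -/
def IsConfig (P : Finset (ℝ × ℝ)) : Prop := ((0, 0) : ℝ × ℝ) ∈ P ∧ ↑P ⊆ unitSq

/-- Area of the closed axis-parallel rectangle with lower left corner `a` and
upper right corner `b`. -/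
def rectArea (a b : ℝ × ℝ) : ℝ := (volume (Set.Icc a b)).toReal

/-- A Bob family for `P`, encoded by assigning to each point `p ∈ P` the upper
right corner `q p` of the closed axis-parallel rectangle placed with lower left
corner `p` (a degenerate rectangle `q p = p` encodes an unused point); the
rectangles lie in the unit square and have pairwise disjoint interiors, and
distinct rectangles automatically have distinct lower left corners. -/
def IsBobFamily (P : Finset (ℝ × ℝ)) (q : ℝ × ℝ → ℝ × ℝ) : Prop :=
  (∀ p ∈ P, p ≤ q p) ∧
  (∀ p ∈ P, Set.Icc p (q p) ⊆ unitSq) ∧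
  (∀ p ∈ P, ∀ p' ∈ P, p ≠ p' →
    interior (Set.Icc p (q p)) ∩ interior (Set.Icc p' (q p')) = ∅)

/-- The total area of a Bob family. -/
def famArea (P : Finset (ℝ × ℝ)) (q : ℝ × ℝ → ℝ × ℝ) : ℝ :=
  ∑ p ∈ P, rectArea p (q p)

/-- `bob(P)`: the supremum of the total area over all Bob families for `P`. -/
def bobP (P : Finset (ℝ × ℝ)) : ℝ :=
  sSup { a : ℝ | ∃ q : ℝ × ℝ → ℝ × ℝ, IsBobFamily P q ∧ a = famArea P q }

/-- `bob(n)`: the infimum of `bob(P)` over all configurations with `n` points. -/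
def bobN (n : ℕ) : ℝ :=
  sInf { a : ℝ | ∃ P : Finset (ℝ × ℝ), IsConfig P ∧ P.card = n ∧ a = bobP P }

/-- `n(r)`: the least `n ≥ 1` with `bob(n) ≤ 1/r`, or `∞` if there is none. -/
def nOf (r : ℝ) : ℕ∞ :=
  sInf { N : ℕ∞ | ∃ n : ℕ, N = (n : ℕ∞) ∧ 1 ≤ n ∧ bobN n ≤ 1 / r }

/-- `stairs(P)`: the union of all closed axis-parallel rectangles in the unit
square with lower left corner `(0,0)` whose interior contains no point of `P`. -/
def stairs (P : Finset (ℝ × ℝ)) : Set (ℝ × ℝ) :=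
  ⋃ b ∈ { b : ℝ × ℝ | b ∈ unitSq ∧ ∀ p ∈ P, p ∉ interior (Set.Icc ((0, 0) : ℝ × ℝ) b) },
    Set.Icc ((0, 0) : ℝ × ℝ) b

/-- `s`: the area of `stairs(P)`. -/
def stairsArea (P : Finset (ℝ × ℝ)) : ℝ := (volume (stairs P)).toReal

/-- `α`: the supremum of areas of axis-parallel rectangles contained in `stairs(P)`. -/
def alphaOf (P : Finset (ℝ × ℝ)) : ℝ :=
  sSup { a : ℝ | ∃ c d : ℝ × ℝ, c ≤ d ∧ Set.Icc c d ⊆ stairs P ∧ a = rectArea c d }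

/-- `ρ := s/α`. -/
def rhoOf (P : Finset (ℝ × ℝ)) : ℝ := stairsArea P / alphaOf P

/-- `a` is a minimum of `S`: no other point of `S` is (weakly) dominated-below it. -/
def IsMinOf (S : Set (ℝ × ℝ)) (a : ℝ × ℝ) : Prop :=
  a ∈ S ∧ ∀ b ∈ S, b ≠ a → ¬(b.1 ≤ a.1 ∧ b.2 ≤ a.2)

/-- `p 0, …, p (k-1)` enumerates the minima of `P \ {(0,0)}` in order of
strictly decreasing `y`-coordinate. -/
def EnumMinima (P : Finset (ℝ × ℝ)) (k : ℕ) (p : Fin k → ℝ × ℝ) : Prop :=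
  (∀ i : Fin k, IsMinOf ((↑P : Set (ℝ × ℝ)) \ {((0, 0) : ℝ × ℝ)}) (p i)) ∧
  (∀ q : ℝ × ℝ, IsMinOf ((↑P : Set (ℝ × ℝ)) \ {((0, 0) : ℝ × ℝ)}) q → ∃ i : Fin k, p i = q) ∧
  (∀ i j : Fin k, i < j → (p j).2 < (p i).2)

/-- The sequence `y₀ = 1`, `yᵢ = y(pᵢ)` (with the paper's `pᵢ` being `p (i-1)` here). -/
def YSeq (k : ℕ) (p : Fin k → ℝ × ℝ) (y : ℕ → ℝ) : Prop :=
  y 0 = 1 ∧ ∀ i : Fin k, y (i.1 + 1) = (p i).2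

/-- The rectangle `Bᵢ = [x(pᵢ), 1] × [yᵢ, y_{i-1}]` (0-indexed here). -/
def rectB (k : ℕ) (p : Fin k → ℝ × ℝ) (y : ℕ → ℝ) (i : Fin k) : Set (ℝ × ℝ) :=
  Set.Icc (((p i).1, y (i.1 + 1)) : ℝ × ℝ) ((1, y i.1) : ℝ × ℝ)

/-- `βᵢ`: the area of `Bᵢ`. -/
def betaOf (k : ℕ) (p : Fin k → ℝ × ℝ) (y : ℕ → ℝ) (i : Fin k) : ℝ :=
  (volume (rectB k p y i)).toReal

/-- The affine map sending the rectangle with corners `a ≤ b` onto `[0,1]²`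
(with `a ↦ (0,0)`). -/
def rectMap (a b : ℝ × ℝ) (q : ℝ × ℝ) : ℝ × ℝ :=
  ((q.1 - a.1) / (b.1 - a.1), (q.2 - a.2) / (b.2 - a.2))

/-- `Pᵢ`: the image of `P ∩ Bᵢ` under the affine map sending `Bᵢ` onto `[0,1]²`. -/
def subConfig (P : Finset (ℝ × ℝ)) (k : ℕ) (p : Fin k → ℝ × ℝ) (y : ℕ → ℝ)
    (i : Fin k) : Finset (ℝ × ℝ) :=
  (P.filter (fun q => q ∈ rectB k p y i)).image
    (rectMap (((p i).1, y (i.1 + 1)) : ℝ × ℝ) ((1, y i.1) : ℝ × ℝ))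


lemma volIcc (a b : ℝ × ℝ) :
    volume (Set.Icc a b) = ENNReal.ofReal (b.1 - a.1) * ENNReal.ofReal (b.2 - a.2) := by
  rw [Set.Icc_prod_eq, Measure.volume_eq_prod, Measure.prod_prod, Real.volume_Icc,
    Real.volume_Icc]

lemma rectArea_zero (q : ℝ × ℝ) (hq : (0, 0) ≤ q) : rectArea (0, 0) q = q.1 * q.2 := by
  rw [rectArea, volIcc]
  rw [Prod.le_def] at hq
  simp only [Prod.fst_zero, Prod.snd_zero, sub_zero]
  rw [← ENNReal.ofReal_mul hq.1, ENNReal.toReal_ofReal (mul_nonneg hq.1 hq.2)]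

lemma stairs_subset (P : Finset (ℝ × ℝ)) : stairs P ⊆ unitSq := by
  refine Set.iUnion₂_subset fun b hb => ?_
  exact Set.Icc_subset_Icc_right hb.1.2

lemma alpha_mem_le_one (P : Finset (ℝ × ℝ)) (a : ℝ)
    (ha : a ∈ { a : ℝ | ∃ c d : ℝ × ℝ, c ≤ d ∧ Set.Icc c d ⊆ stairs P ∧ a = rectArea c d }) :
    a ≤ 1 := by
  obtain ⟨c, d, hcd, hsub, rfl⟩ := ha
  have h1 : Set.Icc c d ⊆ unitSq := hsub.trans (stairs_subset P)
  refine ENNReal.toReal_le_of_le_ofReal zero_le_one ?_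
  calc volume (Set.Icc c d) ≤ volume unitSq := measure_mono h1
    _ = ENNReal.ofReal 1 := by rw [unitSq, volIcc]; norm_num

lemma bddAbove_alpha (P : Finset (ℝ × ℝ)) :
    BddAbove { a : ℝ | ∃ c d : ℝ × ℝ, c ≤ d ∧ Set.Icc c d ⊆ stairs P ∧ a = rectArea c d } :=
  ⟨1, fun a ha => alpha_mem_le_one P a ha⟩

lemma origin_mem_stairs (P : Finset (ℝ × ℝ)) : ((0, 0) : ℝ × ℝ) ∈ stairs P := by
  have hint : interior (Set.Icc ((0, 0) : ℝ × ℝ) ((0, 0) : ℝ × ℝ)) = ∅ := by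
    rw [Set.Icc_prod_eq, interior_prod_eq, interior_Icc]
    simp
  rw [stairs]
  refine Set.mem_biUnion (x := ((0, 0) : ℝ × ℝ))
    ⟨Set.mem_Icc.2 ⟨le_refl _, by rw [Prod.le_def]; norm_num⟩,
      fun p _ => by rw [hint]; exact notMem_empty p⟩
    (Set.mem_Icc.2 ⟨le_refl _, le_refl _⟩)

lemma alpha_mem_zero (P : Finset (ℝ × ℝ)) :
    (0 : ℝ) ∈ { a : ℝ | ∃ c d : ℝ × ℝ, c ≤ d ∧ Set.Icc c d ⊆ stairs P ∧ a = rectArea c d } := by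
  refine ⟨(0, 0), (0, 0), le_refl _, ?_, ?_⟩
  · intro x hx
    have hx' : x = ((0, 0) : ℝ × ℝ) := le_antisymm hx.2 hx.1
    rw [hx']
    exact origin_mem_stairs P
  · rw [rectArea_zero _ (le_refl _)]; norm_num

lemma alpha_nonneg (P : Finset (ℝ × ℝ)) : 0 ≤ alphaOf P :=
  le_csSup (bddAbove_alpha P) (alpha_mem_zero P)

lemma alpha_le_one (P : Finset (ℝ × ℝ)) : alphaOf P ≤ 1 :=
  csSup_le ⟨0, alpha_mem_zero P⟩ (alpha_mem_le_one P)

lemma mul_le_alpha (P : Finset (ℝ × ℝ)) (q : ℝ × ℝ) (hq : q ∈ stairs P) :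
    q.1 * q.2 ≤ alphaOf P := by
  rw [stairs] at hq
  obtain ⟨s, hs, hqs⟩ := Set.mem_iUnion₂.1 hq
  have h0q : ((0, 0) : ℝ × ℝ) ≤ q := hqs.1
  have hsub : Set.Icc ((0, 0) : ℝ × ℝ) q ⊆ stairs P := by
    rw [stairs]
    exact (Set.Icc_subset_Icc_right hqs.2).trans (Set.subset_biUnion_of_mem hs)
  exact (rectArea_zero q h0q) ▸ le_csSup (bddAbove_alpha P) ⟨(0, 0), q, h0q, hsub, rfl⟩

lemma lint_hyp (α : ℝ) (hα : 0 < α) (hα1 : α ≤ 1) :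
    ∫⁻ x in Ioc α 1, ENNReal.ofReal (α / x) = ENNReal.ofReal (α * (- Real.log α)) := by
  have hint : IntegrableOn (fun x => α / x) (Ioc α 1) := by
    apply (ContinuousOn.integrableOn_compact isCompact_Icc ?_).mono_set Ioc_subset_Icc_self
    exact continuousOn_const.div continuousOn_id
      (fun x hx => by simpa using (lt_of_lt_of_le hα hx.1).ne')
  rw [← ofReal_integral_eq_lintegral_ofReal hint]
  · congr 1
    have h1 : ∫ x in Ioc α 1, α / x = ∫ x in α..1, α / x := by
      rw [intervalIntegral.integral_of_le hα1]
    have h2 : ∫ x in α..1, α / x = α * ∫ x in α..1, 1 / x := by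
      rw [← intervalIntegral.integral_const_mul]
      congr 1; ext x; ring
    rw [h1, h2, integral_one_div_of_pos hα (by linarith), Real.log_div one_ne_zero (by linarith)]
    simp
  · filter_upwards [self_mem_ae_restrict measurableSet_Ioc] with x hx
    have : 0 < x := lt_of_lt_of_le hα hx.1.le
    positivity

lemma vol_T_le (α : ℝ) (hα : 0 < α) (hα1 : α ≤ 1) :
    volume {q : ℝ × ℝ | q ∈ unitSq ∧ q.1 * q.2 ≤ α} ≤
      ENNReal.ofReal (α * (1 - Real.log α)) := by
  set T : Set (ℝ × ℝ) := {q : ℝ × ℝ | q ∈ unitSq ∧ q.1 * q.2 ≤ α} with hTdef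
  have hT : MeasurableSet T := by
    apply MeasurableSet.inter
    · exact measurableSet_Icc
    · exact (measurable_fst.mul measurable_snd) measurableSet_Iic
  set g : ℝ → ENNReal := fun x => (Icc (0:ℝ) α).indicator (fun _ => 1) x +
    (Ioc α 1).indicator (fun x => ENNReal.ofReal (α / x)) x with hgdef
  have hfg : ∀ x : ℝ, volume (Prod.mk x ⁻¹' T) ≤ g x := by
    intro x
    by_cases hx0 : x ∈ Icc (0:ℝ) α
    · have hsub : Prod.mk x ⁻¹' T ⊆ Icc (0:ℝ) 1 := by
        intro y hy
        obtain ⟨h1, _⟩ := hy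
        rw [unitSq, Set.mem_Icc, Prod.le_def, Prod.le_def] at h1
        exact ⟨h1.1.2, h1.2.2⟩
      calc volume (Prod.mk x ⁻¹' T) ≤ volume (Icc (0:ℝ) 1) := measure_mono hsub
        _ = 1 := by rw [Real.volume_Icc]; norm_num
        _ ≤ g x := by
            rw [hgdef]
            simp only [indicator_of_mem hx0]
            exact le_add_of_nonneg_right zero_le
    · by_cases hx1 : x ∈ Ioc α 1
      · have hxpos : 0 < x := lt_of_lt_of_le hα hx1.1.le
        have hsub : Prod.mk x ⁻¹' T ⊆ Icc (0:ℝ) (α / x) := by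
          intro y hy
          obtain ⟨h1, h2⟩ := hy
          rw [unitSq, Set.mem_Icc, Prod.le_def, Prod.le_def] at h1
          refine ⟨h1.1.2, ?_⟩
          rw [le_div_iff₀ hxpos]
          linarith [h2]
        calc volume (Prod.mk x ⁻¹' T) ≤ volume (Icc (0:ℝ) (α / x)) := measure_mono hsub
          _ = ENNReal.ofReal (α / x) := by rw [Real.volume_Icc, sub_zero]
          _ ≤ g x := by
              rw [hgdef]
              simp only [indicator_of_mem hx1]
              exact le_add_of_nonneg_left zero_le
      · have hempty : Prod.mk x ⁻¹' T = ∅ := by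
          ext y
          simp only [Set.mem_preimage, Set.mem_empty_iff_false, iff_false]
          intro hy
          obtain ⟨h1, h2⟩ := hy
          rw [unitSq, Set.mem_Icc, Prod.le_def, Prod.le_def] at h1
          dsimp only at h1 h2
          have hy0 : 0 ≤ y := h1.1.2
          rw [Set.mem_Icc] at hx0
          rw [Set.mem_Ioc] at hx1
          push_neg at hx0 hx1
          rcases lt_or_ge x 0 with h | h
          · linarith [h1.1.1]
          · have hxα : α < x := hx0 h
            exact absurd h1.2.1 (by linarith [(hx1 hxα)])
        rw [hempty]
        simp
  calc volume T = ∫⁻ x, volume (Prod.mk x ⁻¹' T) := by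
        rw [Measure.volume_eq_prod, Measure.prod_apply hT]
    _ ≤ ∫⁻ x, g x := lintegral_mono hfg
    _ = (∫⁻ x, (Icc (0:ℝ) α).indicator (fun _ => 1) x) +
        ∫⁻ x, (Ioc α 1).indicator (fun x => ENNReal.ofReal (α / x)) x := by
        rw [hgdef]
        exact lintegral_add_left (measurable_const.indicator measurableSet_Icc) _
    _ = ENNReal.ofReal α + ENNReal.ofReal (α * (- Real.log α)) := by
        rw [lintegral_indicator measurableSet_Ioc, lint_hyp α hα hα1,
          lintegral_indicator_const measurableSet_Icc, Real.volume_Icc, sub_zero, one_mul]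
    _ = ENNReal.ofReal (α * (1 - Real.log α)) := by
        rw [← ENNReal.ofReal_add hα.le (by nlinarith [Real.log_nonpos hα.le hα1])]
        congr 1
        ring

/-- With `ρ := s/α`, one has `α ≤ e^(−ρ+1)`. -/
theorem statement6 :
    ∀ P : Finset (ℝ × ℝ), IsConfig P → P ≠ {((0, 0) : ℝ × ℝ)} →
      alphaOf P ≤ Real.exp (-(rhoOf P) + 1) := by
  intro P _ _
  rcases eq_or_lt_of_le (alpha_nonneg P) with h0 | hpos
  · rw [rhoOf, ← h0, div_zero, neg_zero, zero_add]
    exact (Real.exp_pos 1).le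
  · have hα1 : alphaOf P ≤ 1 := alpha_le_one P
    have hlog : Real.log (alphaOf P) ≤ 0 := Real.log_nonpos hpos.le hα1
    have hs : stairsArea P ≤ alphaOf P * (1 - Real.log (alphaOf P)) := by
      have hsub : stairs P ⊆ {q : ℝ × ℝ | q ∈ unitSq ∧ q.1 * q.2 ≤ alphaOf P} :=
        fun q hq => ⟨stairs_subset P hq, mul_le_alpha P q hq⟩
      refine ENNReal.toReal_le_of_le_ofReal (by nlinarith) ?_
      exact (measure_mono hsub).trans (vol_T_le _ hpos hα1)
    have hρ : rhoOf P ≤ 1 - Real.log (alphaOf P) := by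
      rw [rhoOf, div_le_iff₀ hpos]
      nlinarith
    calc alphaOf P = Real.exp (Real.log (alphaOf P)) := (Real.exp_log hpos).symm
      _ ≤ Real.exp (-(rhoOf P) + 1) := Real.exp_le_exp.2 (by linarith)
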